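/- The aggregation subspace $\mathcal{G}(\mathbf{y})$, the set of all $L^2$-limits $\lim_n a_n^\top \mathbf{y}$ over averaging sequences $(a_n)$, is a closed linear subspace of the Hilbert space $H(\mathbf{y})$. -/
import Mathlib


open Filter MeasureTheory

/-- The aggregation subspace `𝒢(y)`: the set of all `L²`-limits `z = limₙ aₙ⊤y`
where `(aₙ)` is an averaging sequence (`aₙ ∈ ℓ² ∩ ℓ²(Σ)`, `‖aₙ‖₂ → 0`), each
`aₙ⊤y` being defined as the `L²`-limit `s n` of the partial sums. -/
def aggregationSet {Ω : Type*} [MeasurableSpace Ω] {μ : Measure Ω}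
    (y : ℕ → Lp ℝ 2 μ) : Set (Lp ℝ 2 μ) :=
  {z | ∃ (a : ℕ → ℕ → ℝ) (s : ℕ → Lp ℝ 2 μ),
    (∀ n, Memℓp (a n) 2) ∧
    Tendsto (fun n => ∑' k, (a n k) ^ 2) atTop (nhds 0) ∧
    (∀ n, Tendsto (fun N => ∑ k ∈ Finset.range N, a n k • y k) atTop (nhds (s n))) ∧
    Tendsto s atTop (nhds z)}

lemma memℓp_two_summable_sq {f : ℕ → ℝ} (hf : Memℓp f 2) :
    Summable fun k => f k ^ 2 := by
  have h := hf.summable (p := 2) (by norm_num)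
  have : (fun k => ‖f k‖ ^ (ENNReal.toReal 2)) = fun k => f k ^ 2 := by
    funext k
    rw [ENNReal.toReal_ofNat, show ((2:ℝ)) = ((2:ℕ):ℝ) by norm_num,
      Real.rpow_natCast]
    simp [sq_abs]
  rwa [this] at h

lemma tsum_sq_nonneg (f : ℕ → ℝ) : 0 ≤ ∑' k, f k ^ 2 :=
  tsum_nonneg fun k => sq_nonneg _

set_option synthInstance.maxHeartbeats 1000000 in
/-- the aggregation subspace `𝒢(y)` is a closed linear subspace of the
Hilbert space `H(y)` (the closed linear span of the components of `y` in `L²`). -/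
theorem aggregation_closed_subspace
    {Ω : Type*} [MeasurableSpace Ω] (μ : Measure Ω) [IsProbabilityMeasure μ]
    (y : ℕ → Lp ℝ 2 μ)
    (hmean : ∀ k, ∫ ω, (y k : Ω → ℝ) ω ∂μ = 0) :
    ∃ S : Submodule ℝ (Lp ℝ 2 μ),
      (S : Set (Lp ℝ 2 μ)) = aggregationSet y ∧
      IsClosed (S : Set (Lp ℝ 2 μ)) ∧
      S ≤ (Submodule.span ℝ (Set.range y)).topologicalClosure := by
  classical
  -- the submodule structure
  refine ⟨{ carrier := aggregationSet y
            zero_mem' := ?_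
            add_mem' := ?_
            smul_mem' := ?_ }, rfl, ?_, ?_⟩
  · -- closed under addition
    rintro z w ⟨a, s, ha, haT, haS, haL⟩ ⟨b, t, hb, hbT, hbS, hbL⟩
    refine ⟨fun n k => a n k + b n k, fun n => s n + t n, ?_, ?_, ?_, ?_⟩
    · intro n
      exact (ha n).add (hb n)
    · -- tsum of squares of sum tends to 0
      have key : ∀ n, ∑' k, (a n k + b n k) ^ 2 ≤
          2 * (∑' k, (a n k) ^ 2) + 2 * (∑' k, (b n k) ^ 2) := by
        intro n
        have hsa := memℓp_two_summable_sq (ha n)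
        have hsb := memℓp_two_summable_sq (hb n)
        calc ∑' k, (a n k + b n k) ^ 2
            ≤ ∑' k, (2 * (a n k) ^ 2 + 2 * (b n k) ^ 2) := by
              refine Summable.tsum_le_tsum (fun k => ?_) ?_ ?_
              · nlinarith [sq_nonneg (a n k - b n k)]
              · exact memℓp_two_summable_sq ((ha n).add (hb n))
              · exact ((hsa.mul_left 2).add (hsb.mul_left 2))
          _ = 2 * (∑' k, (a n k) ^ 2) + 2 * (∑' k, (b n k) ^ 2) := by
              rw [Summable.tsum_add (hsa.mul_left 2) (hsb.mul_left 2), tsum_mul_left, tsum_mul_left]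
      have hlim : Tendsto (fun n => 2 * (∑' k, (a n k) ^ 2) + 2 * (∑' k, (b n k) ^ 2))
          atTop (nhds 0) := by
        have := ((haT.const_mul 2).add (hbT.const_mul 2))
        simpa using this
      exact squeeze_zero (fun n => tsum_sq_nonneg _) key hlim
    · intro n
      have : (fun N => ∑ k ∈ Finset.range N, (a n k + b n k) • y k) =
          fun N => (∑ k ∈ Finset.range N, a n k • y k) + ∑ k ∈ Finset.range N, b n k • y k := by
        funext N
        rw [← Finset.sum_add_distrib]
        exact Finset.sum_congr rfl fun k _ => add_smul _ _ _
      rw [this]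
      exact (haS n).add (hbS n)
    · exact haL.add hbL
  · -- 0 ∈ 𝒢
    refine ⟨fun _ _ => 0, fun _ => 0, fun n => zero_memℓp, by simpa using tendsto_const_nhds, fun n => by simpa using tendsto_const_nhds, tendsto_const_nhds⟩
  · -- closed under scalar multiplication
    rintro c z ⟨a, s, ha, haT, haS, haL⟩
    refine ⟨fun n k => c * a n k, fun n => c • s n, ?_, ?_, ?_, ?_⟩
    · intro n
      exact (ha n).const_smul c
    · have : (fun n => ∑' k, (c * a n k) ^ 2) = fun n => c ^ 2 * ∑' k, (a n k) ^ 2 := by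
        funext n
        rw [← tsum_mul_left]
        exact tsum_congr fun k => by ring
      rw [this]
      simpa using haT.const_mul (c ^ 2)
    · intro n
      have : (fun N => ∑ k ∈ Finset.range N, (c * a n k) • y k) =
          fun N => c • ∑ k ∈ Finset.range N, a n k • y k := by
        funext N
        rw [Finset.smul_sum]
        exact Finset.sum_congr rfl fun k _ => by rw [smul_smul]
      rw [this]
      exact (haS n).const_smul c
    · exact haL.const_smul c
  · -- closedness
    refine IsSeqClosed.isClosed ?_
    intro x z hx hxz
    choose a s ha haT haS haL using hx
    -- diagonal extraction
    have hsel : ∀ m : ℕ, ∃ N, dist (s m N) (x m) < 1 / (m + 1) ∧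
        ∑' k, (a m N k) ^ 2 < 1 / (m + 1) := by
      intro m
      have h1 : ∀ᶠ N in atTop, dist (s m N) (x m) < 1 / (m + 1) := by
        have := (haL m)
        rw [Metric.tendsto_atTop] at this
        obtain ⟨N0, hN0⟩ := this (1 / (m + 1)) (by positivity)
        exact eventually_atTop.2 ⟨N0, fun N hN => hN0 N hN⟩
      have h2 : ∀ᶠ N in atTop, ∑' k, (a m N k) ^ 2 < 1 / (m + 1) := by
        have := (haT m).eventually (eventually_lt_nhds (show (0:ℝ) < 1 / (m+1) by positivity))
        exact this
      exact (h1.and h2).exists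
    choose N hN1 hN2 using hsel
    refine ⟨fun m => a m (N m), fun m => s m (N m), fun m => ha m (N m), ?_, fun m => haS m (N m), ?_⟩
    · refine squeeze_zero (fun m => tsum_sq_nonneg _) (fun m => (hN2 m).le) ?_
      exact tendsto_one_div_add_atTop_nhds_zero_nat
    · rw [tendsto_iff_dist_tendsto_zero]
      refine squeeze_zero (fun m => dist_nonneg) (fun m => dist_triangle _ (x m) z) ?_
      have h1 : Tendsto (fun m => dist (s m (N m)) (x m)) atTop (nhds 0) :=
        squeeze_zero (fun m => dist_nonneg) (fun m => (hN1 m).le)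
          tendsto_one_div_add_atTop_nhds_zero_nat
      have h2 : Tendsto (fun m => dist (x m) z) atTop (nhds 0) :=
        (tendsto_iff_dist_tendsto_zero).1 hxz
      simpa using h1.add h2
  · -- contained in the closed span
    rintro z ⟨a, s, ha, haT, haS, haL⟩
    have hcl : ((Submodule.span ℝ (Set.range y)).topologicalClosure : Set (Lp ℝ 2 μ)) =
        closure (Submodule.span ℝ (Set.range y) : Set (Lp ℝ 2 μ)) := rfl
    have hspan : ∀ n, s n ∈ closure (Submodule.span ℝ (Set.range y) : Set (Lp ℝ 2 μ)) := by
      intro n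
      refine mem_closure_of_tendsto (haS n) (Eventually.of_forall fun N => ?_)
      exact Submodule.sum_mem _ fun k _ =>
        Submodule.smul_mem _ _ (Submodule.subset_span ⟨k, rfl⟩)
    have : z ∈ closure (Submodule.span ℝ (Set.range y) : Set (Lp ℝ 2 μ)) := by
      have := mem_closure_of_tendsto haL (Eventually.of_forall hspan)
      rwa [closure_closure] at this
    exact this
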